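/- With 𝒵_0 the set of superhedging portfolios (a closed convex set in ℝ^d with 𝒵_0 + 𝒦_0 = 𝒵_0) and Z_0 its negative's support function Z_0(x) = sup{xᵀz : z ∈ −𝒵_0}, the ask price of the option in asset i satisfies π_i^a(ξ) := min{x ∈ ℝ : x e^i ∈ 𝒵_0} = −min{Z_0(x) : x ∈ ℝ^d, x_i = 1}, provided both extrema exist and are finite. -/
import Mathlib


open Matrix Pointwise

/-- Support function of a set `A ⊆ ℝⁿ`, with values in the extended reals. -/
noncomputable def suppF {n : ℕ} (A : Set (Fin n → ℝ)) (x : Fin n → ℝ) : EReal :=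
  sSup ((fun z => ((x ⬝ᵥ z : ℝ) : EReal)) '' A)

/-- with `𝒵₀` the (nonempty closed convex) set of superhedging
portfolios, `𝒵₀ + 𝒦₀ = 𝒵₀` for the solvency cone `𝒦₀` (which contains the
nonnegative orthant), and `Z₀` the support function of `−𝒵₀`, the ask price
satisfies `min{x : x eⁱ ∈ 𝒵₀} = −min{Z₀(x) : xᵢ = 1}`, provided both extrema
exist and are finite. -/
theorem stmt13 (d : ℕ) (Z0set K0 : Set (Fin d → ℝ))
    (hne : Z0set.Nonempty) (hcl : IsClosed Z0set) (hconv : Convex ℝ Z0set)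
    (hK0cone : ∀ (r : ℝ), 0 ≤ r → ∀ k ∈ K0, r • k ∈ K0)
    (hK0orth : ∀ v : Fin d → ℝ, (∀ k, 0 ≤ v k) → v ∈ K0)
    (hZK : Z0set + K0 = Z0set)
    (Z0 : (Fin d → ℝ) → EReal) (hZ0 : Z0 = suppF (-Z0set))
    (i : Fin d) (a m : ℝ)
    (ha : IsLeast {x : ℝ | (Pi.single i x : Fin d → ℝ) ∈ Z0set} a)
    (hm : IsLeast {r : EReal | ∃ x : Fin d → ℝ, x i = 1 ∧ Z0 x = r} ((m : ℝ) : EReal)) :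
    a = -m := by
  -- Step 1:  -m ≤ a
  have h1 : -m ≤ a := by
    obtain ⟨x, hxi, hZx⟩ := hm.1
    have hmem : ((x ⬝ᵥ (-(Pi.single i a : Fin d → ℝ)) : ℝ) : EReal) ∈
        ((fun z => ((x ⬝ᵥ z : ℝ) : EReal)) '' (-Z0set)) :=
      ⟨-(Pi.single i a), by simpa using ha.1, rfl⟩
    have hle : ((x ⬝ᵥ (-(Pi.single i a : Fin d → ℝ)) : ℝ) : EReal) ≤ ((m : ℝ) : EReal) := by
      rw [← hZx, hZ0, suppF]; exact le_sSup hmem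
    have : x ⬝ᵥ (-(Pi.single i a : Fin d → ℝ)) = -a := by
      rw [dotProduct_neg, dotProduct_single, hxi, one_mul]
    rw [this] at hle
    have := EReal.coe_le_coe_iff.mp hle
    linarith
  -- Step 2:  a ≤ -m, via separation.
  have h2 : (Pi.single i (-m) : Fin d → ℝ) ∈ Z0set := by
    by_contra hns
    obtain ⟨f, u, hfu, hub⟩ := geometric_hahn_banach_point_closed hconv hcl hns
    set x : Fin d → ℝ := fun j => f (Pi.single j 1) with hx
    have hfz : ∀ z : Fin d → ℝ, f z = x ⬝ᵥ z := by
      intro z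
      have := LinearMap.pi_apply_eq_sum_univ (f : (Fin d → ℝ) →ₗ[ℝ] ℝ) z
      simp only [ContinuousLinearMap.coe_coe] at this
      rw [this, dotProduct]
      refine Finset.sum_congr rfl fun j _ => ?_
      have : (fun k => if j = k then (1:ℝ) else 0) = (Pi.single j 1 : Fin d → ℝ) := by
        funext k; simp [Pi.single_apply, eq_comm]
      rw [this, smul_eq_mul, mul_comm]
    obtain ⟨z0, hz0⟩ := hne
    -- x is componentwise nonnegative
    have hxnn : ∀ j, 0 ≤ x j := by
      intro j
      by_contra hneg
      push_neg at hneg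
      set r : ℝ := (u - f z0 - 1) / x j with hr
      have hrpos : 0 < r := div_pos_of_neg_of_neg (by linarith [hub z0 hz0]) hneg
      have hkk : (r • (Pi.single j 1 : Fin d → ℝ)) ∈ K0 := by
        refine hK0orth _ fun k => ?_
        by_cases hjk : j = k <;> simp [Pi.single_apply, hjk, hrpos.le]
      have hmem2 : z0 + r • (Pi.single j 1 : Fin d → ℝ) ∈ Z0set := by
        rw [← hZK]; exact Set.add_mem_add hz0 hkk
      have := hub _ hmem2
      rw [map_add, f.map_smul] at this
      have hfe : f (Pi.single j 1 : Fin d → ℝ) = x j := rfl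
      rw [hfe, smul_eq_mul, hr, div_mul_cancel₀ _ (ne_of_lt hneg)] at this
      linarith
    -- x i > 0
    have hfi : f (Pi.single i (-m) : Fin d → ℝ) = x i * (-m) := by
      rw [hfz, dotProduct_single]
    have hxipos : 0 < x i := by
      rcases lt_or_eq_of_le (hxnn i) with h | h
      · exact h
      · exfalso
        have h1' : (0:ℝ) < u := by rw [hfi, ← h] at hfu; linarith
        have h2' := hub _ ha.1
        rw [hfz, dotProduct_single, ← h] at h2'
        linarith
    -- normalized functional
    set y : Fin d → ℝ := (x i)⁻¹ • x with hy
    have hyi : y i = 1 := by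
      simp [hy, inv_mul_cancel₀ (ne_of_gt hxipos)]
    have hbd : Z0 y ≤ ((-(x i)⁻¹ * u : ℝ) : EReal) := by
      rw [hZ0, suppF]
      refine sSup_le ?_
      rintro r ⟨w, hw, rfl⟩
      obtain ⟨z, hz, rfl⟩ : ∃ z ∈ Z0set, -z = w := by
        simpa [Set.mem_neg] using ⟨-w, hw, by simp⟩
      rw [EReal.coe_le_coe_iff]
      have huz := hub z hz
      rw [hfz] at huz
      have : y ⬝ᵥ (-z) = -((x i)⁻¹ * (x ⬝ᵥ z)) := by
        rw [dotProduct_neg, hy, smul_dotProduct, smul_eq_mul]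
      rw [this, neg_mul]
      have := mul_le_mul_of_nonneg_left huz.le (inv_nonneg.mpr hxipos.le)
      linarith
    have hlt : (-(x i)⁻¹ * u : ℝ) < m := by
      have h3 : x i * (-m) < u := by rw [← hfi]; exact hfu
      have h4 := mul_lt_mul_of_pos_left h3 (inv_pos.mpr hxipos)
      rw [← mul_assoc, inv_mul_cancel₀ (ne_of_gt hxipos), one_mul] at h4
      nlinarith
    have hge : ((m : ℝ) : EReal) ≤ Z0 y := hm.2 ⟨y, hyi, rfl⟩
    have : ((m : ℝ) : EReal) < ((m : ℝ) : EReal) :=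
      lt_of_le_of_lt (hge.trans hbd) (EReal.coe_lt_coe_iff.mpr hlt)
    exact lt_irrefl _ this
  have h3 : a ≤ -m := ha.2 h2
  linarith
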